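/- If f = ℓ₀ + ℓ₁² + ⋯ + ℓₘ² for some linear ℓ₀,…,ℓₘ ∈ ℝ⟨x⟩, then Dₙ(1 − f) is a convex subset of the space of d-tuples of n×n real matrices for every n ∈ ℕ. -/

import Mathlib

open scoped BigOperators

/-- `ℓ ∈ ℝ⟨x⟩` is linear if it is an `ℝ`-linear combination of the variables. -/
def IsLin (d : ℕ) (ℓ : FreeAlgebra ℝ (Fin d)) : Prop :=
  ∃ c : Fin d → ℝ, ℓ = ∑ i, c i • FreeAlgebra.ι ℝ i

/-- Evaluation of `f ∈ ℝ⟨x⟩` at a `d`-tuple of `n × n` real matrices. -/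
noncomputable def freeEvalR (d n : ℕ) (X : Fin d → Matrix (Fin n) (Fin n) ℝ) :
    FreeAlgebra ℝ (Fin d) →ₐ[ℝ] Matrix (Fin n) (Fin n) ℝ :=
  FreeAlgebra.lift ℝ X

/-- `Dₙ(g)`: the closure of the connected component of the origin of
`{X ∈ 𝕊ₙ^d : g(X) ≻ 0}`, inside the space of `d`-tuples of `n × n` real matrices. -/
def Dn (d n : ℕ) (g : FreeAlgebra ℝ (Fin d)) : Set (Fin d → Matrix (Fin n) (Fin n) ℝ) :=
  closure (connectedComponentIn
    {X : Fin d → Matrix (Fin n) (Fin n) ℝ |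
      (∀ i, (X i).IsSymm) ∧ (freeEvalR d n X g).PosDef} 0)

section Aux

open Matrix

variable {n : ℕ}

lemma posDef_smul_aux {A : Matrix (Fin n) (Fin n) ℝ} (hA : A.PosDef) {a : ℝ} (ha : 0 < a) :
    (a • A).PosDef := by
  refine ⟨?_, fun x hx => ?_⟩
  · have h1 : Aᵀ = A := by
      have := hA.1
      rwa [Matrix.IsHermitian, Matrix.conjTranspose_eq_transpose_of_trivial] at this
    show (a • A)ᴴ = a • A
    rw [Matrix.conjTranspose_eq_transpose_of_trivial, Matrix.transpose_smul, h1]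
  · refine (mul_pos ha (hA.2 hx)).trans_eq ?_
    simp only [Finsupp.sum, Finset.mul_sum, Matrix.smul_apply, smul_eq_mul]
    exact Finset.sum_congr rfl fun i _ => Finset.sum_congr rfl fun j _ => by ring

lemma posSemidef_smul_aux {A : Matrix (Fin n) (Fin n) ℝ} (hA : A.PosSemidef) {a : ℝ}
    (ha : 0 ≤ a) : (a • A).PosSemidef := by
  refine ⟨?_, fun x => ?_⟩
  · have h1 : Aᵀ = A := by
      have := hA.1
      rwa [Matrix.IsHermitian, Matrix.conjTranspose_eq_transpose_of_trivial] at this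
    show (a • A)ᴴ = a • A
    rw [Matrix.conjTranspose_eq_transpose_of_trivial, Matrix.transpose_smul, h1]
  · refine (mul_nonneg ha (hA.2 x)).trans_eq ?_
    simp only [Finsupp.sum, Finset.mul_sum, Matrix.smul_apply, smul_eq_mul]
    exact Finset.sum_congr rfl fun i _ => Finset.sum_congr rfl fun j _ => by ring

lemma sq_posSemidef_aux {A : Matrix (Fin n) (Fin n) ℝ} (hA : A.IsSymm) : (A ^ 2).PosSemidef := by
  have h : A ^ 2 = Aᴴ * A := by
    rw [Matrix.conjTranspose_eq_transpose_of_trivial, hA.eq, sq]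
  rw [h]
  exact Matrix.posSemidef_conjTranspose_mul_self A

lemma posSemidef_sum_aux {ι : Type*} (s : Finset ι) (F : ι → Matrix (Fin n) (Fin n) ℝ)
    (h : ∀ i ∈ s, (F i).PosSemidef) : (∑ i ∈ s, F i).PosSemidef := by
  classical
  induction s using Finset.induction_on with
  | empty => simpa using Matrix.PosSemidef.zero
  | insert x s hx ih =>
    rw [Finset.sum_insert hx]
    exact (h _ (Finset.mem_insert_self _ _)).add
      (ih fun i hi => h i (Finset.mem_insert_of_mem hi))

lemma symm_sum_aux (cc : Fin d → ℝ) (Z : Fin d → Matrix (Fin n) (Fin n) ℝ)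
    (hZ : ∀ i, (Z i).IsSymm) : (∑ i, cc i • Z i).IsSymm := by
  show (∑ i, cc i • Z i)ᵀ = _
  rw [Matrix.transpose_sum]
  exact Finset.sum_congr rfl fun i _ => (hZ i).smul (cc i)

lemma sq_combo_aux (a : ℝ) (p q : Matrix (Fin n) (Fin n) ℝ) :
    (a • p + (1 - a) • q) ^ 2
      = a • p ^ 2 + (1 - a) • q ^ 2 - (a * (1 - a)) • (p - q) ^ 2 := by
  simp only [sq, add_mul, mul_add, sub_mul, mul_sub, smul_mul_smul_comm, smul_sub, smul_add]
  module

end Aux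

/-- If `f = ℓ₀ + ℓ₁² + ⋯ + ℓₘ²` for linear `ℓ₀, …, ℓₘ`, then `Dₙ(1 - f)` is convex for
every `n ∈ ℕ`. -/
theorem Dn_one_sub_convex (d : ℕ) (hd : 0 < d) (m : ℕ)
    (ℓ₀ : FreeAlgebra ℝ (Fin d)) (ℓ : Fin m → FreeAlgebra ℝ (Fin d))
    (hℓ₀ : IsLin d ℓ₀) (hℓ : ∀ i, IsLin d (ℓ i))
    (f : FreeAlgebra ℝ (Fin d)) (hf : f = ℓ₀ + ∑ i, (ℓ i) ^ 2) :
    ∀ n : ℕ, Convex ℝ (Dn d n (1 - f)) := by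
  intro n
  obtain ⟨c₀, hc₀⟩ := hℓ₀
  choose c hc using hℓ
  have evalLin : ∀ (cc : Fin d → ℝ) (Z : Fin d → Matrix (Fin n) (Fin n) ℝ),
      freeEvalR d n Z (∑ i, cc i • FreeAlgebra.ι ℝ i) = ∑ i, cc i • Z i := by
    intro cc Z
    simp [freeEvalR]
  have evalf : ∀ Z : Fin d → Matrix (Fin n) (Fin n) ℝ,
      freeEvalR d n Z (1 - f)
        = 1 - ((∑ i, c₀ i • Z i) + ∑ j, (∑ i, c j i • Z i) ^ 2) := by
    intro Z
    rw [hf, map_sub, map_one, map_add, map_sum]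
    rw [hc₀, evalLin]
    congr 1
    congr 1
    exact Finset.sum_congr rfl fun j _ => by rw [map_pow, hc, evalLin]
  set S : Set (Fin d → Matrix (Fin n) (Fin n) ℝ) :=
    {X : Fin d → Matrix (Fin n) (Fin n) ℝ |
      (∀ i, (X i).IsSymm) ∧ (freeEvalR d n X (1 - f)).PosDef} with hS
  have hconv : Convex ℝ S := by
    rw [convex_iff_forall_pos]
    rintro X ⟨hXs, hXp⟩ Y ⟨hYs, hYp⟩ a b ha hb hab
    have hb1 : b = 1 - a := by linarith
    subst hb1
    have hlin : ∀ cc : Fin d → ℝ,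
        (∑ i, cc i • (a • X + (1 - a) • Y) i)
          = a • (∑ i, cc i • X i) + (1 - a) • (∑ i, cc i • Y i) := by
      intro cc
      simp only [Pi.add_apply, Pi.smul_apply, smul_add, Finset.sum_add_distrib,
        Finset.smul_sum]
      congr 1 <;> exact Finset.sum_congr rfl fun i _ => smul_comm _ _ _
    constructor
    · intro i
      simp only [Pi.add_apply, Pi.smul_apply]
      exact ((hXs i).smul a).add ((hYs i).smul (1 - a))
    · rw [evalf] at hXp hYp ⊢
      have eq1 : ∑ j, (∑ i, c j i • (a • X + (1 - a) • Y) i) ^ 2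
          = a • (∑ j, (∑ i, c j i • X i) ^ 2) + (1 - a) • (∑ j, (∑ i, c j i • Y i) ^ 2)
            - (a * (1 - a)) • ∑ j, ((∑ i, c j i • X i) - (∑ i, c j i • Y i)) ^ 2 := by
        rw [Finset.smul_sum, Finset.smul_sum, Finset.smul_sum, ← Finset.sum_add_distrib,
          ← Finset.sum_sub_distrib]
        exact Finset.sum_congr rfl fun j _ => by rw [hlin (c j)]; exact sq_combo_aux a _ _
      rw [hlin c₀, eq1]
      have main : (1 : Matrix (Fin n) (Fin n) ℝ)
            - ((a • (∑ i, c₀ i • X i) + (1 - a) • (∑ i, c₀ i • Y i))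
              + (a • (∑ j, (∑ i, c j i • X i) ^ 2) + (1 - a) • (∑ j, (∑ i, c j i • Y i) ^ 2)
                - (a * (1 - a)) • ∑ j, ((∑ i, c j i • X i) - (∑ i, c j i • Y i)) ^ 2))
          = a • (1 - ((∑ i, c₀ i • X i) + ∑ j, (∑ i, c j i • X i) ^ 2))
            + (1 - a) • (1 - ((∑ i, c₀ i • Y i) + ∑ j, (∑ i, c j i • Y i) ^ 2))
            + (a * (1 - a)) • ∑ j, ((∑ i, c j i • X i) - (∑ i, c j i • Y i)) ^ 2 := by
        module
      rw [main]
      have hR : ((a * (1 - a)) • ∑ j, ((∑ i, c j i • X i) - (∑ i, c j i • Y i)) ^ 2).PosSemidef := by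
        refine posSemidef_smul_aux ?_ (by nlinarith)
        refine posSemidef_sum_aux _ _ fun j _ => ?_
        exact sq_posSemidef_aux ((symm_sum_aux (c j) X hXs).sub (symm_sum_aux (c j) Y hYs))
      exact ((posDef_smul_aux hXp ha).add (posDef_smul_aux hYp (by linarith))).add_posSemidef hR
  have h0 : (0 : Fin d → Matrix (Fin n) (Fin n) ℝ) ∈ S := by
    constructor
    · intro i; exact Matrix.isSymm_zero
    · rw [evalf]
      simp only [Pi.zero_apply, smul_zero, Finset.sum_const_zero, ne_eq, zero_pow,
        zero_add, sub_zero, add_zero]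
      simpa using Matrix.PosDef.one
  rw [Dn, hconv.isPreconnected.connectedComponentIn h0]
  exact hconv.closure
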